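/- For all real numbers x ≤ 0 and y ≥ 0 one has 2·g(x,y)·[Φ(x) − Φ(x−y)] ≤ f(x,y) ≤ 2·g(x,0)·[Φ(x) − Φ(x−y)]. -/

import Mathlib

open Real Filter MeasureTheory

/-- Standard normal density. -/
noncomputable def stdPhi (u : ℝ) : ℝ := (Real.sqrt (2 * Real.pi))⁻¹ * Real.exp (-u ^ 2 / 2)

/-- Standard normal distribution function. -/
noncomputable def stdCdf (u : ℝ) : ℝ := ∫ s in Set.Iic u, stdPhi s

/-- Standard normal survivor function. -/
noncomputable def stdSurv (u : ℝ) : ℝ := 1 - stdCdf u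

noncomputable def fFun (x y : ℝ) : ℝ := stdSurv (x - y) - Real.exp (2 * x * y) * stdSurv (x + y)

noncomputable def gFun (x y : ℝ) : ℝ := 1 - x * stdSurv (x + y) / stdPhi (x + y)

lemma stdPhi_pos (u : ℝ) : 0 < stdPhi u := by
  have : 0 < Real.sqrt (2 * Real.pi) := Real.sqrt_pos.2 (by positivity)
  exact mul_pos (inv_pos.2 this) (Real.exp_pos _)

lemma continuous_stdPhi : Continuous stdPhi := by
  unfold stdPhi; fun_prop

lemma stdPhi_eq (u : ℝ) : stdPhi u = (Real.sqrt (2 * Real.pi))⁻¹ * Real.exp (-(1/2) * u ^ 2) := by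
  unfold stdPhi; ring_nf

lemma integrable_stdPhi : Integrable stdPhi := by
  have := (integrable_exp_neg_mul_sq (b := 1/2) (by norm_num)).const_mul (Real.sqrt (2 * Real.pi))⁻¹
  have h2 : (fun u => (Real.sqrt (2 * Real.pi))⁻¹ * Real.exp (-(1/2) * u ^ 2)) = stdPhi :=
    funext fun u => (stdPhi_eq u).symm
  rwa [h2] at this

lemma integral_stdPhi : ∫ u, stdPhi u = 1 := by
  have h := integral_gaussian (1/2)
  have : ∫ u, stdPhi u = (Real.sqrt (2 * Real.pi))⁻¹ * ∫ u, Real.exp (-(1/2) * u ^ 2) := by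
    rw [← integral_const_mul]; congr 1; ext u; rw [stdPhi_eq]
  rw [this, h]
  have : Real.pi / (1/2 : ℝ) = 2 * Real.pi := by ring
  rw [this]
  exact inv_mul_cancel₀ (by positivity)

lemma stdSurv_eq (u : ℝ) : stdSurv u = ∫ s in Set.Ioi u, stdPhi s := by
  have h := intervalIntegral.integral_Iic_add_Ioi (b := u) (f := stdPhi) (μ := volume)
    integrable_stdPhi.integrableOn integrable_stdPhi.integrableOn
  rw [integral_stdPhi] at h
  unfold stdSurv stdCdf
  linarith

lemma stdSurv_nonneg (u : ℝ) : 0 ≤ stdSurv u := by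
  rw [stdSurv_eq]
  exact setIntegral_nonneg measurableSet_Ioi fun s _ => (stdPhi_pos s).le

lemma stdSurv_pos (u : ℝ) : 0 < stdSurv u := by
  rw [stdSurv_eq]
  apply (setIntegral_pos_iff_support_of_nonneg_ae
    (Filter.Eventually.of_forall fun s => (stdPhi_pos s).le) integrable_stdPhi.integrableOn).2
  have : Function.support stdPhi = Set.univ := by
    ext s; simp [Function.mem_support, (stdPhi_pos s).ne']
  rw [this, Set.univ_inter]
  simp

lemma hasDerivAt_stdCdf (u : ℝ) : HasDerivAt stdCdf (stdPhi u) u := by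
  have key : ∀ v : ℝ, stdCdf v = stdCdf 0 + ∫ s in (0:ℝ)..v, stdPhi s := by
    intro v
    have := intervalIntegral.integral_Iic_sub_Iic (μ := volume) (a := (0:ℝ)) (b := v)
      integrable_stdPhi.integrableOn integrable_stdPhi.integrableOn
    unfold stdCdf; linarith
  have hderiv : HasDerivAt (fun v => stdCdf 0 + ∫ s in (0:ℝ)..v, stdPhi s) (stdPhi u) u := by
    apply HasDerivAt.const_add
    exact intervalIntegral.integral_hasDerivAt_right
      integrable_stdPhi.intervalIntegrable
      (continuous_stdPhi.stronglyMeasurableAtFilter _ _)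
      continuous_stdPhi.continuousAt
  exact hderiv.congr_of_eventuallyEq (Filter.Eventually.of_forall key)

lemma hasDerivAt_stdPhi (u : ℝ) : HasDerivAt stdPhi (-u * stdPhi u) u := by
  have h1 : HasDerivAt (fun v : ℝ => -v ^ 2 / 2) (-u) u := by
    have := ((hasDerivAt_pow 2 u).neg).div_const 2
    simpa using this.congr_deriv (by ring)
  have := ((h1.exp).const_mul ((Real.sqrt (2 * Real.pi))⁻¹))
  unfold stdPhi
  exact this.congr_deriv (by ring)

lemma hasDerivAt_stdSurv (u : ℝ) : HasDerivAt stdSurv (-stdPhi u) u := by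
  have := (hasDerivAt_stdCdf u).const_sub 1
  exact this

lemma tendsto_stdPhi_atTop : Tendsto stdPhi atTop (nhds 0) := by
  have h : Tendsto (fun u : ℝ => -u ^ 2 / 2) atTop atBot := by
    apply Filter.Tendsto.atBot_div_const (by norm_num)
    exact tendsto_neg_atBot_iff.2 (tendsto_pow_atTop (by norm_num))
  have := Real.tendsto_exp_atBot.comp h
  have h2 := this.const_mul ((Real.sqrt (2 * Real.pi))⁻¹)
  rw [mul_zero] at h2
  exact h2

lemma hasDerivAt_negPhi (s : ℝ) : HasDerivAt (fun v => -stdPhi v) (s * stdPhi s) s := by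
  exact (hasDerivAt_stdPhi s).neg.congr_deriv (by ring)

lemma integral_id_mul_stdPhi_Ioi (u : ℝ) (hu : 0 ≤ u) :
    ∫ s in Set.Ioi u, s * stdPhi s = stdPhi u := by
  have h := integral_Ioi_of_hasDerivAt_of_nonneg (a := u) (g := fun v => -stdPhi v)
    (g' := fun s => s * stdPhi s) (l := 0)
    (continuous_stdPhi.neg.continuousWithinAt)
    (fun s _ => hasDerivAt_negPhi s)
    (fun s hs => mul_nonneg (le_trans hu (le_of_lt hs)) (stdPhi_pos s).le)
    (by simpa using tendsto_stdPhi_atTop.neg)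
  simpa using h

lemma integrableOn_id_mul_stdPhi (u : ℝ) (hu : 0 ≤ u) :
    IntegrableOn (fun s => s * stdPhi s) (Set.Ioi u) := by
  exact integrableOn_Ioi_deriv_of_nonneg (continuous_stdPhi.neg.continuousWithinAt)
    (fun s _ => hasDerivAt_negPhi s)
    (fun s hs => mul_nonneg (le_trans hu (le_of_lt hs)) (stdPhi_pos s).le)
    (by exact tendsto_stdPhi_atTop.neg)

lemma mills_bound (u : ℝ) : u * stdSurv u ≤ stdPhi u := by
  rcases le_or_gt u 0 with h | h
  · exact le_trans (mul_nonpos_of_nonpos_of_nonneg h (stdSurv_nonneg u)) (stdPhi_pos u).le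
  · have h1 : u * stdSurv u = ∫ s in Set.Ioi u, u * stdPhi s := by
      rw [stdSurv_eq, ← integral_const_mul]
    rw [h1, ← integral_id_mul_stdPhi_Ioi u h.le]
    apply setIntegral_mono_on
    · exact (integrable_stdPhi.const_mul u).integrableOn
    · exact integrableOn_id_mul_stdPhi u h.le
    · exact measurableSet_Ioi
    · intro s hs
      exact mul_le_mul_of_nonneg_right (le_of_lt hs) (stdPhi_pos s).le

noncomputable def mills (u : ℝ) : ℝ := stdSurv u / stdPhi u

lemma hasDerivAt_mills (u : ℝ) :
    HasDerivAt mills (u * stdSurv u / stdPhi u - 1) u := by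
  have h := (hasDerivAt_stdSurv u).div (hasDerivAt_stdPhi u) (stdPhi_pos u).ne'
  have : (-stdPhi u * stdPhi u - stdSurv u * (-u * stdPhi u)) / stdPhi u ^ 2
      = u * stdSurv u / stdPhi u - 1 := by
    have hp : stdPhi u ≠ 0 := (stdPhi_pos u).ne'
    field_simp
    ring
  rw [this] at h
  exact h

lemma mills_antitone : Antitone mills := by
  apply antitone_of_deriv_nonpos
  · exact fun u => ((hasDerivAt_mills u).differentiableAt)
  · intro u
    rw [(hasDerivAt_mills u).deriv]
    have := mills_bound u
    have hp := stdPhi_pos u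
    rw [sub_nonpos, div_le_one hp]
    exact this

lemma exp_mul_stdPhi (x y : ℝ) :
    Real.exp (2 * x * y) * stdPhi (x + y) = stdPhi (x - y) := by
  unfold stdPhi
  rw [mul_left_comm, ← Real.exp_add]
  congr 2
  ring

lemma gFun_eq (x y : ℝ) : gFun x y = 1 - x * mills (x + y) := by
  unfold gFun mills
  rw [mul_div_assoc]

lemma gFun_anti {x : ℝ} (hx : x ≤ 0) {s t : ℝ} (hst : s ≤ t) : gFun x t ≤ gFun x s := by
  rw [gFun_eq, gFun_eq]
  have h1 : mills (x + t) ≤ mills (x + s) := mills_antitone (by linarith)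
  nlinarith

lemma hasDerivAt_G (x : ℝ) (t : ℝ) :
    HasDerivAt (fun t => stdCdf x - stdCdf (x - t)) (stdPhi (x - t)) t := by
  have h1 : HasDerivAt (fun t : ℝ => x - t) (-1) t := by
    simpa using (hasDerivAt_id t).const_sub x
  have h2 := (hasDerivAt_stdCdf (x - t)).comp t h1
  have h3 := h2.const_sub (stdCdf x)
  simpa using h3

lemma hasDerivAt_F (x : ℝ) (t : ℝ) :
    HasDerivAt (fun t => fFun x t) (2 * stdPhi (x - t) * gFun x t) t := by
  have h1 : HasDerivAt (fun t : ℝ => x - t) (-1) t := by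
    simpa using (hasDerivAt_id t).const_sub x
  have h1' : HasDerivAt (fun t : ℝ => x + t) 1 t := by
    simpa using (hasDerivAt_id t).const_add x
  have hS1 : HasDerivAt (fun t => stdSurv (x - t)) (stdPhi (x - t)) t := by
    have := (hasDerivAt_stdSurv (x - t)).comp t h1
    exact this.congr_deriv (by ring)
  have hS2 : HasDerivAt (fun t => stdSurv (x + t)) (-stdPhi (x + t)) t := by
    have := (hasDerivAt_stdSurv (x + t)).comp t h1'
    exact this.congr_deriv (by ring)
  have hE : HasDerivAt (fun t : ℝ => Real.exp (2 * x * t)) (2 * x * Real.exp (2 * x * t)) t := by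
    have harg : HasDerivAt (fun t : ℝ => 2 * x * t) (2 * x) t := by
      simpa using (hasDerivAt_id t).const_mul (2 * x)
    simpa [mul_comm] using harg.exp
  have hprod := hE.mul hS2
  have h := hS1.sub hprod
  have heq : stdPhi (x - t) - (2 * x * Real.exp (2 * x * t) * stdSurv (x + t)
      + Real.exp (2 * x * t) * -stdPhi (x + t)) = 2 * stdPhi (x - t) * gFun x t := by
    have hid := exp_mul_stdPhi x t
    have hp : stdPhi (x + t) ≠ 0 := (stdPhi_pos _).ne'
    unfold gFun
    rw [← hid]
    field_simp
    ring
  rw [heq] at h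
  exact h

/-- Two-sided estimate for f in the case x ≤ 0. -/
theorem fFun_bounds_of_nonpos (x y : ℝ) (hx : x ≤ 0) (hy : 0 ≤ y) :
    2 * gFun x y * (stdCdf x - stdCdf (x - y)) ≤ fFun x y ∧
      fFun x y ≤ 2 * gFun x 0 * (stdCdf x - stdCdf (x - y)) := by
  have hF0 : fFun x 0 = 0 := by simp [fFun]
  constructor
  · -- lower bound
    have hE : ∀ t, HasDerivAt (fun t => fFun x t - 2 * gFun x y * (stdCdf x - stdCdf (x - t)))
        (2 * stdPhi (x - t) * gFun x t - 2 * gFun x y * stdPhi (x - t)) t :=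
      fun t => (hasDerivAt_F x t).sub ((hasDerivAt_G x t).const_mul (2 * gFun x y))
    have hmono : MonotoneOn (fun t => fFun x t - 2 * gFun x y * (stdCdf x - stdCdf (x - t)))
        (Set.Icc 0 y) := by
      apply monotoneOn_of_deriv_nonneg (convex_Icc 0 y)
      · exact fun t _ => (hE t).differentiableAt.continuousAt.continuousWithinAt
      · exact fun t _ => (hE t).differentiableAt.differentiableWithinAt
      · intro t ht
        rw [interior_Icc] at ht
        rw [(hE t).deriv]
        have hg := gFun_anti hx ht.2.le
        have hφ := stdPhi_pos (x - t)
        nlinarith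
    have h0 := hmono (Set.left_mem_Icc.2 hy) (Set.right_mem_Icc.2 hy) hy
    simp only [sub_zero, mul_zero, Real.exp_zero, hF0] at h0
    simp only [sub_self, mul_zero, zero_sub] at h0
    linarith
  · -- upper bound
    have hE : ∀ t, HasDerivAt (fun t => 2 * gFun x 0 * (stdCdf x - stdCdf (x - t)) - fFun x t)
        (2 * gFun x 0 * stdPhi (x - t) - 2 * stdPhi (x - t) * gFun x t) t :=
      fun t => ((hasDerivAt_G x t).const_mul (2 * gFun x 0)).sub (hasDerivAt_F x t)
    have hmono : MonotoneOn (fun t => 2 * gFun x 0 * (stdCdf x - stdCdf (x - t)) - fFun x t)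
        (Set.Icc 0 y) := by
      apply monotoneOn_of_deriv_nonneg (convex_Icc 0 y)
      · exact fun t _ => (hE t).differentiableAt.continuousAt.continuousWithinAt
      · exact fun t _ => (hE t).differentiableAt.differentiableWithinAt
      · intro t ht
        rw [interior_Icc] at ht
        rw [(hE t).deriv]
        have hg := gFun_anti hx ht.1.le
        have hφ := stdPhi_pos (x - t)
        nlinarith
    have h0 := hmono (Set.left_mem_Icc.2 hy) (Set.right_mem_Icc.2 hy) hy
    simp only [sub_zero, mul_zero, Real.exp_zero, hF0] at h0
    simp only [sub_self, mul_zero, zero_sub] at h0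
    linarith
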